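/- Let δ : Fin 7 → ℝ be nonnegative with δ 0 ≥ δ i for every i. Then (√(δ 0) + (1/2) · ∑_{i=1}^{6} √(δ i))² ≥ ∑_{i=0}^{6} δ i. -/

import Mathlib

theorem sqrt_weighted_sum_sq_ge {δ : Fin 7 → ℝ}
    (hnn : ∀ i, 0 ≤ δ i) (hmax : ∀ i, δ i ≤ δ 0) :
    (∑ i, δ i) ≤
      (Real.sqrt (δ 0) + (1/2) * ∑ i ∈ Finset.univ \ {0}, Real.sqrt (δ i)) ^ 2 := by
  set s := ∑ i ∈ Finset.univ \ {0}, Real.sqrt (δ i) with hs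
  have hsplit : (∑ i, δ i) = δ 0 + ∑ i ∈ Finset.univ \ {0}, δ i := by
    rw [Finset.sum_eq_sum_sdiff_singleton_add (Finset.mem_univ (0 : Fin 7)) δ]
    ring
  have hkey : ∑ i ∈ Finset.univ \ {0}, δ i ≤ Real.sqrt (δ 0) * s := by
    rw [hs, Finset.mul_sum]
    apply Finset.sum_le_sum
    intro i _
    calc δ i = Real.sqrt (δ i) * Real.sqrt (δ i) := (Real.mul_self_sqrt (hnn i)).symm
      _ ≤ _ := mul_le_mul_of_nonneg_right (Real.sqrt_le_sqrt (hmax i)) (Real.sqrt_nonneg _)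
  have hsq : δ 0 = Real.sqrt (δ 0) ^ 2 := (Real.sq_sqrt (hnn 0)).symm
  have hsnn : 0 ≤ s := Finset.sum_nonneg fun i _ => Real.sqrt_nonneg _
  nlinarith [sq_nonneg s]
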